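/- Let a : ℝ → ℝ be continuous, 1-periodic, strictly positive, and not constant, and let δ ≠ 0 be real. Define C₂ = ⟨a⁻¹·[[[[a]]]]⟩, C₉ = ⟨a·[[a⁻¹·[[a]]]]⟩, C₁₁ = ⟨a⁻¹·[[a·[[a⁻¹]]]]⟩, α₅ᵦ = δ²(−C₉/(⟨a⁻¹⟩⟨a⟩²) + C₂/(⟨a⁻¹⟩⟨a⟩)), and β₁₁ᵦ = δ²(−C₁₁/(⟨a⁻¹⟩²⟨a⟩) + C₂/(⟨a⁻¹⟩⟨a⟩)). If C₂ ≥ 0, then α₅ᵦ > 0 and β₁₁ᵦ > 0. -/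

import Mathlib

open MeasureTheory Matrix

/-- The mean of a function over one period: `⟨b⟩ = ∫₀¹ b(y) dy`. -/
noncomputable def pmean (b : ℝ → ℝ) : ℝ := ∫ y in (0:ℝ)..1, b y

/-- The fluctuating (mean-zero) part: `{b} = b − ⟨b⟩`. -/
noncomputable def pfluct (b : ℝ → ℝ) : ℝ → ℝ := fun y => b y - pmean b

/-- The mean-zero primitive of the fluctuating part:
`[[b]](y) = ∫₀^y {b}(ξ) dξ − ∫₀¹ (∫₀^s {b}(ξ) dξ) ds`. -/
noncomputable def pbracket (b : ℝ → ℝ) : ℝ → ℝ :=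
  fun y => (∫ ξ in (0:ℝ)..y, pfluct b ξ) - ∫ s in (0:ℝ)..1, (∫ ξ in (0:ℝ)..s, pfluct b ξ)

lemma pfluct_cont {f : ℝ → ℝ} (hf : Continuous f) : Continuous (pfluct f) :=
  hf.sub continuous_const

lemma pbracket_hasDerivAt {f : ℝ → ℝ} (hf : Continuous f) (y : ℝ) :
    HasDerivAt (pbracket f) (pfluct f y) y := by
  have h := ((pfluct_cont hf).integral_hasStrictDerivAt 0 y).hasDerivAt
  exact h.sub_const _

lemma pbracket_cont {f : ℝ → ℝ} (hf : Continuous f) : Continuous (pbracket f) := by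
  have : Differentiable ℝ (pbracket f) := fun y => (pbracket_hasDerivAt hf y).differentiableAt
  exact this.continuous

lemma integral_pfluct {f : ℝ → ℝ} (hf : Continuous f) :
    ∫ y in (0:ℝ)..1, pfluct f y = 0 := by
  have h1 : ∫ y in (0:ℝ)..1, pfluct f y
      = (∫ y in (0:ℝ)..1, f y) - ∫ y in (0:ℝ)..1, (pmean f) :=
    intervalIntegral.integral_sub (hf.intervalIntegrable _ _) intervalIntegrable_const
  simp [h1, pmean]

lemma pbracket_one {f : ℝ → ℝ} (hf : Continuous f) : pbracket f 1 = pbracket f 0 := by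
  simp [pbracket, integral_pfluct hf]

lemma integral_pbracket {f : ℝ → ℝ} (hf : Continuous f) :
    ∫ y in (0:ℝ)..1, pbracket f y = 0 := by
  have hF : Continuous (fun y => ∫ ξ in (0:ℝ)..y, pfluct f ξ) := by
    have : Differentiable ℝ (fun y => ∫ ξ in (0:ℝ)..y, pfluct f ξ) := fun y =>
      (((pfluct_cont hf).integral_hasStrictDerivAt 0 y).hasDerivAt).differentiableAt
    exact this.continuous
  simp only [pbracket]
  rw [intervalIntegral.integral_sub (hF.intervalIntegrable _ _) intervalIntegrable_const]
  simp

/-- Integration by parts for the bracket: `⟨f·[[g]]⟩ = −⟨[[f]]·g⟩`. -/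
lemma ibp {f g : ℝ → ℝ} (hf : Continuous f) (hg : Continuous g) :
    ∫ y in (0:ℝ)..1, f y * pbracket g y = -∫ y in (0:ℝ)..1, pbracket f y * g y := by
  have hFf := pbracket_cont hf
  have hFg := pbracket_cont hg
  have key : ∫ y in (0:ℝ)..1, (pfluct f y * pbracket g y + pbracket f y * pfluct g y)
      = pbracket f 1 * pbracket g 1 - pbracket f 0 * pbracket g 0 :=
    intervalIntegral.integral_deriv_mul_eq_sub
      (fun x _ => pbracket_hasDerivAt hf x) (fun x _ => pbracket_hasDerivAt hg x)
      ((pfluct_cont hf).intervalIntegrable _ _) ((pfluct_cont hg).intervalIntegrable _ _)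
  rw [pbracket_one hf, pbracket_one hg, sub_self] at key
  have hsplit : ∫ y in (0:ℝ)..1, (pfluct f y * pbracket g y + pbracket f y * pfluct g y)
      = (∫ y in (0:ℝ)..1, pfluct f y * pbracket g y)
        + ∫ y in (0:ℝ)..1, pbracket f y * pfluct g y :=
    intervalIntegral.integral_add (((pfluct_cont hf).mul hFg).intervalIntegrable _ _)
      ((hFf.mul (pfluct_cont hg)).intervalIntegrable _ _)
  have h1 : ∫ y in (0:ℝ)..1, f y * pbracket g y
      = ∫ y in (0:ℝ)..1, pfluct f y * pbracket g y := by
    have he : (fun y => f y * pbracket g y)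
        = fun y => pfluct f y * pbracket g y + pmean f * pbracket g y := by
      funext y; simp only [pfluct]; ring
    rw [he, intervalIntegral.integral_add (f := fun y => pfluct f y * pbracket g y)
      (g := fun y => pmean f * pbracket g y) (((pfluct_cont hf).mul hFg).intervalIntegrable _ _)
      ((continuous_const.mul hFg).intervalIntegrable _ _),
      intervalIntegral.integral_const_mul, integral_pbracket hg, mul_zero, add_zero]
  have h2 : ∫ y in (0:ℝ)..1, pbracket f y * g y
      = ∫ y in (0:ℝ)..1, pbracket f y * pfluct g y := by
    have he : (fun y => pbracket f y * g y)
        = fun y => pbracket f y * pfluct g y + pbracket f y * pmean g := by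
      funext y; simp only [pfluct]; ring
    rw [he, intervalIntegral.integral_add (f := fun y => pbracket f y * pfluct g y)
      (g := fun y => pbracket f y * pmean g) ((hFf.mul (pfluct_cont hg)).intervalIntegrable _ _)
      ((hFf.mul continuous_const).intervalIntegrable _ _),
      intervalIntegral.integral_mul_const, integral_pbracket hf, zero_mul, add_zero]
  rw [h1, h2]
  linarith [hsplit, key]

lemma int_pos {f w : ℝ → ℝ} (hf : Continuous f) (hw : Continuous w)
    (hwpos : ∀ y, 0 < w y) (hx : ∃ x ∈ Set.Ioo (0:ℝ) 1, pbracket f x ≠ 0) :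
    0 < ∫ y in (0:ℝ)..1, w y * (pbracket f y)^2 := by
  obtain ⟨x, hx01, hxne⟩ := hx
  have hcont : Continuous fun y => w y * (pbracket f y)^2 := hw.mul ((pbracket_cont hf).pow 2)
  rw [intervalIntegral.integral_pos_iff_support_of_nonneg_ae
    (Filter.Eventually.of_forall fun y => mul_nonneg (hwpos y).le (sq_nonneg _))
    (hcont.intervalIntegrable _ _)]
  refine ⟨one_pos, ?_⟩
  have hU : IsOpen ({y | w y * (pbracket f y)^2 ≠ 0} ∩ Set.Ioo 0 1) :=
    (isOpen_compl_singleton.preimage hcont).inter isOpen_Ioo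
  have hxU : x ∈ {y | w y * (pbracket f y)^2 ≠ 0} ∩ Set.Ioo 0 1 :=
    ⟨mul_ne_zero (hwpos x).ne' (pow_ne_zero 2 hxne), hx01⟩
  refine lt_of_lt_of_le (hU.measure_pos volume ⟨x, hxU⟩) (measure_mono ?_)
  rintro y ⟨hy1, hy2⟩
  exact ⟨hy1, Set.Ioo_subset_Ioc_self hy2⟩

lemma const_of_pbracket_zero {f : ℝ → ℝ} (hf : Continuous f) (hper : Function.Periodic f 1)
    (h0 : ∀ x ∈ Set.Ioo (0:ℝ) 1, pbracket f x = 0) : ∀ x y, f x = f y := by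
  have hIoo : ∀ x ∈ Set.Ioo (0:ℝ) 1, f x = pmean f := by
    intro x hx
    have hd := pbracket_hasDerivAt hf x
    have hzero : HasDerivAt (pbracket f) 0 x := by
      have hev : (fun _ => (0:ℝ)) =ᶠ[nhds x] pbracket f := by
        filter_upwards [Ioo_mem_nhds hx.1 hx.2] with y hy using (h0 y hy).symm
      exact (hasDerivAt_const x (0:ℝ)).congr_of_eventuallyEq hev.symm
    have huniq : pfluct f x = 0 := hd.unique hzero
    have : f x - pmean f = 0 := huniq
    linarith
  have hIcc : ∀ x ∈ Set.Icc (0:ℝ) 1, f x = pmean f := by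
    have hS : IsClosed {x : ℝ | f x = pmean f} := isClosed_eq hf continuous_const
    have hsub : Set.Ioo (0:ℝ) 1 ⊆ {x : ℝ | f x = pmean f} := hIoo
    intro x hx
    have : Set.Icc (0:ℝ) 1 ⊆ {x : ℝ | f x = pmean f} := by
      rw [← closure_Ioo (by norm_num : (0:ℝ) ≠ 1)]
      exact closure_minimal hsub hS
    exact this hx
  have hall : ∀ x : ℝ, f x = pmean f := by
    intro x
    have h1 : f x = f (Int.fract x) := by
      have := hper.sub_int_mul_eq (x := x) ⌊x⌋
      simp only [mul_one] at this
      rw [Int.fract]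
      exact this.symm
    rw [h1]
    exact hIcc _ ⟨(Int.fract_nonneg x), (Int.fract_lt_one x).le⟩
  intro x y; rw [hall x, hall y]

/-- For `a` continuous, 1-periodic, strictly positive and non-constant, and
`δ ≠ 0`, if `C₂ = ⟨a⁻¹·[[[[a]]]]⟩ ≥ 0` then the BBM-type dispersion coefficients
`α₅ᵦ = δ²(−C₉/(⟨a⁻¹⟩⟨a⟩²) + C₂/(⟨a⁻¹⟩⟨a⟩))` and
`β₁₁ᵦ = δ²(−C₁₁/(⟨a⁻¹⟩²⟨a⟩) + C₂/(⟨a⁻¹⟩⟨a⟩))` are strictly positive. -/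
theorem statement16 (a : ℝ → ℝ) (ha : Continuous a) (hper : Function.Periodic a 1)
    (hpos : ∀ y, 0 < a y) (hnc : ∃ x y, a x ≠ a y) (δ : ℝ) (hδ : δ ≠ 0)
    (C₂ C₉ C₁₁ α₅b β₁₁b : ℝ)
    (hC2 : C₂ = pmean (fun y => (a y)⁻¹ * pbracket (pbracket a) y))
    (hC9 : C₉ = pmean (fun y => a y * pbracket (fun z => (a z)⁻¹ * pbracket a z) y))
    (hC11 : C₁₁ = pmean (fun y => (a y)⁻¹
        * pbracket (fun z => a z * pbracket (fun w => (a w)⁻¹) z) y))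
    (hα : α₅b = δ^2 * (-C₉ / (pmean (fun y => (a y)⁻¹) * (pmean a)^2)
        + C₂ / (pmean (fun y => (a y)⁻¹) * pmean a)))
    (hβ : β₁₁b = δ^2 * (-C₁₁ / ((pmean (fun y => (a y)⁻¹))^2 * pmean a)
        + C₂ / (pmean (fun y => (a y)⁻¹) * pmean a)))
    (hC2nn : 0 ≤ C₂) :
    0 < α₅b ∧ 0 < β₁₁b := by
  have hane : ∀ y, a y ≠ 0 := fun y => (hpos y).ne'
  have hainv : Continuous (fun y => (a y)⁻¹) := ha.inv₀ hane
  have hainvper : Function.Periodic (fun y => (a y)⁻¹) 1 := fun x => by simp [hper x]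
  have hainvpos : ∀ y, 0 < (a y)⁻¹ := fun y => inv_pos.mpr (hpos y)
  -- means are positive
  have hm1 : 0 < pmean a :=
    intervalIntegral.intervalIntegral_pos_of_pos_on (ha.intervalIntegrable _ _)
      (fun x _ => hpos x) one_pos
  have hm2 : 0 < pmean (fun y => (a y)⁻¹) :=
    intervalIntegral.intervalIntegral_pos_of_pos_on (hainv.intervalIntegrable _ _)
      (fun x _ => hainvpos x) one_pos
  -- nonvanishing of the brackets
  have hexa : ∃ x ∈ Set.Ioo (0:ℝ) 1, pbracket a x ≠ 0 := by
    by_contra h; push_neg at h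
    obtain ⟨x, y, hxy⟩ := hnc
    exact hxy (const_of_pbracket_zero ha hper h x y)
  have hexainv : ∃ x ∈ Set.Ioo (0:ℝ) 1, pbracket (fun y => (a y)⁻¹) x ≠ 0 := by
    by_contra h; push_neg at h
    obtain ⟨x, y, hxy⟩ := hnc
    have := const_of_pbracket_zero hainv hainvper h x y
    exact hxy (inv_injective this)
  -- C₉ < 0
  have hC9neg : C₉ < 0 := by
    have hg : Continuous (fun z => (a z)⁻¹ * pbracket a z) := hainv.mul (pbracket_cont ha)
    have h1 : C₉ = -∫ y in (0:ℝ)..1, pbracket a y * ((a y)⁻¹ * pbracket a y) := by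
      rw [hC9]; exact ibp ha hg
    have h2 : (fun y => pbracket a y * ((a y)⁻¹ * pbracket a y))
        = fun y => (a y)⁻¹ * (pbracket a y)^2 := by funext y; ring
    rw [h1, h2, neg_lt, neg_zero]
    exact int_pos ha hainv hainvpos hexa
  -- C₁₁ < 0
  have hC11neg : C₁₁ < 0 := by
    have hg : Continuous (fun z => a z * pbracket (fun w => (a w)⁻¹) z) :=
      ha.mul (pbracket_cont hainv)
    have h1 : C₁₁ = -∫ y in (0:ℝ)..1,
        pbracket (fun y => (a y)⁻¹) y * (a y * pbracket (fun w => (a w)⁻¹) y) := by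
      rw [hC11]; exact ibp hainv hg
    have h2 : (fun y => pbracket (fun y => (a y)⁻¹) y * (a y * pbracket (fun w => (a w)⁻¹) y))
        = fun y => a y * (pbracket (fun y => (a y)⁻¹) y)^2 := by funext y; ring
    rw [h1, h2, neg_lt, neg_zero]
    exact int_pos hainv ha hpos hexainv
  have hδ2 : (0:ℝ) < δ^2 := by positivity
  constructor
  · rw [hα]
    refine mul_pos hδ2 (add_pos_of_pos_of_nonneg ?_ ?_)
    · exact div_pos (by linarith) (mul_pos hm2 (pow_pos hm1 2))
    · exact div_nonneg hC2nn (mul_pos hm2 hm1).le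
  · rw [hβ]
    refine mul_pos hδ2 (add_pos_of_pos_of_nonneg ?_ ?_)
    · exact div_pos (by linarith) (mul_pos (pow_pos hm2 2) hm1)
    · exact div_nonneg hC2nn (mul_pos hm2 hm1).le
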